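/- Case 1 of the previous bound: if p ≥ 2, d ≥ 1 are integers, n, k > 0 are reals with e*k^2 ≥ n*p*d, then for every integer s with 1 ≤ s ≤ p*d/2, (e*k^2/(n*p*d))^(s/(p*d)) * (s/k) ≤ sqrt(p*d/n). -/

import Mathlib

theorem sum_upperbound_case1 (p d : ℕ) (hp : 2 ≤ p) (hd : 1 ≤ d) (n k : ℝ)
    (hn : 0 < n) (hk : 0 < k) (hcase : n * p * d ≤ Real.exp 1 * k ^ 2)
    (s : ℕ) (hs1 : 1 ≤ s) (hs2 : (s : ℝ) ≤ p * d / 2) :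
    (Real.exp 1 * k ^ 2 / (n * p * d)) ^ ((s : ℝ) / (p * d)) * (s / k) ≤
      Real.sqrt (p * d / n) := by
  have hp0 : (0:ℝ) < p := by exact_mod_cast Nat.lt_of_lt_of_le Nat.zero_lt_two hp
  have hd0 : (0:ℝ) < d := by exact_mod_cast hd
  have hP : (0:ℝ) < (p:ℝ) * d := mul_pos hp0 hd0
  set r : ℝ := Real.exp 1 * k ^ 2 / (n * p * d) with hr
  have hden : (0:ℝ) < n * p * d := by positivity
  have hr1 : 1 ≤ r := by
    rw [hr, le_div_iff₀ hden]; linarith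
  have hr0 : 0 ≤ r := by linarith
  have hexp : (s:ℝ) / ((p:ℝ) * d) ≤ 1/2 := by
    rw [div_le_iff₀ hP]; linarith
  have h1 : r ^ ((s : ℝ) / ((p:ℝ) * d)) ≤ r ^ ((1:ℝ)/2) :=
    Real.rpow_le_rpow_of_exponent_le hr1 hexp
  have hs0 : (0:ℝ) ≤ (s:ℝ) := by positivity
  have h2 : (s:ℝ) / k ≤ ((p:ℝ) * d / 2) / k :=
    by gcongr
  have hlhs : r ^ ((s : ℝ) / ((p:ℝ) * d)) * ((s:ℝ) / k) ≤
      r ^ ((1:ℝ)/2) * (((p:ℝ) * d / 2) / k) := by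
    apply mul_le_mul h1 h2 (by positivity) (by positivity)
  refine hlhs.trans ?_
  rw [← Real.sqrt_eq_rpow]
  have hsq : Real.sqrt r * (((p:ℝ) * d / 2) / k) =
      Real.sqrt (r * (((p:ℝ) * d / 2) / k)^2) := by
    rw [Real.sqrt_mul hr0, Real.sqrt_sq (by positivity)]
  rw [hsq]
  apply Real.sqrt_le_sqrt
  have hrval : r * (((p:ℝ) * d / 2) / k)^2 = Real.exp 1 * ((p:ℝ)*d) / (4*n) := by
    rw [hr]
    field_simp [hr]
    ring
  rw [hrval]
  have he : Real.exp 1 ≤ 4 := by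
    have := Real.exp_one_lt_d9
    linarith
  rw [div_le_div_iff₀ (by positivity) hn]
  have : (0:ℝ) ≤ (p:ℝ)*d*n := by positivity
  nlinarith [mul_pos hP hn]
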